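/- Let x_n = (p_n, v_n) be the trajectory generated by a secure control input, i.e., u_n(t) = κ(t) (u_max/‖p_n(t)‖) p_n(t) with κ(t) ∈ {−1,1} and p_n(t) ≠ 0 for all t, with initial condition p_n(0) = (x̄₁, 0) and v_n(0) = (x̄₃, 0), where x̄₁ > 0 and x̄₃ ∈ ℝ. Then for all t ≥ 0 the trajectory remains on the positive x-axis with velocity along the x-axis: p_n(t) = (p_n¹(t), 0) with p_n¹(t) > 0, and v_n(t) = (v_n¹(t), 0). -/

import Mathlib

open scoped InnerProductSpace

noncomputable abbrev E2 := EuclideanSpace ℝ (Fin 2)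

/-- **Secure trajectories starting on the positive x-axis stay on it.** Let
`xₙ = (pₙ, vₙ)` be generated by a secure control input
`uₙ(t) = κ(t) (u_max/‖pₙ(t)‖) pₙ(t)` with `κ(t) ∈ {−1, 1}` and `pₙ(t) ≠ 0` at
all times, with initial conditions `pₙ(0) = (x̄₁, 0)`, `vₙ(0) = (x̄₃, 0)` where
`x̄₁ > 0`. Then for all `t ≥ 0` the trajectory stays on the positive x-axis
with velocity along the x-axis: `pₙ(t) = (pₙ¹(t), 0)` with `pₙ¹(t) > 0`, and
`vₙ(t) = (vₙ¹(t), 0)`. -/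
theorem secure_trajectory_stays_on_axis
    (umax : ℝ) (humax : 0 < umax)
    (pn vn : ℝ → E2) (κ : ℝ → ℝ)
    -- secure control input: values in {−1, 1}, extremal radial form, pₙ ≠ 0
    (hκ : ∀ t ≥ (0 : ℝ), κ t = 1 ∨ κ t = -1)
    (hne : ∀ t ≥ (0 : ℝ), pn t ≠ 0)
    -- nominal double-integrator dynamics: ṗₙ = vₙ, v̇ₙ = uₙ = κ(u_max/‖pₙ‖)pₙ
    (hpn : ∀ t ≥ (0 : ℝ), HasDerivAt pn (vn t) t)
    (hvn : ∀ t ≥ (0 : ℝ), HasDerivAt vn ((κ t * umax / ‖pn t‖) • pn t) t)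
    -- initial conditions on the positive x-axis
    (x1bar x3bar : ℝ) (hx1 : 0 < x1bar)
    (hp0 : pn 0 0 = x1bar ∧ pn 0 1 = 0)
    (hv0 : vn 0 0 = x3bar ∧ vn 0 1 = 0) :
    ∀ t ≥ (0 : ℝ), pn t 1 = 0 ∧ 0 < pn t 0 ∧ vn t 1 = 0 := by
  have hpc : ∀ t ≥ (0:ℝ), ContinuousAt pn t := fun t ht => (hpn t ht).continuousAt
  -- second components vanish on [0, T] for each T
  have key : ∀ T ≥ (0:ℝ), pn T 1 = 0 ∧ vn T 1 = 0 := by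
    intro T hT
    obtain ⟨m, hmem, hm⟩ := (isCompact_Icc : IsCompact (Set.Icc (0:ℝ) T)).exists_isMinOn
      (Set.nonempty_Icc.2 hT)
      ((continuousOn_of_forall_continuousAt fun s hs => (hpc s hs.1)).norm)
    have hμpos : 0 < ‖pn m‖ := norm_pos_iff.2 (hne m hmem.1)
    set K := max 1 (umax / ‖pn m‖) with hKdef
    have hK1 : (1:ℝ) ≤ K := le_max_left _ _
    set g : ℝ → ℝ × ℝ := fun t => (pn t 1, vn t 1) with hg
    set g' : ℝ → ℝ × ℝ := fun t => (vn t 1, (κ t * umax / ‖pn t‖) * pn t 1) with hg'def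
    have hg' : ∀ t ∈ Set.Icc (0:ℝ) T, HasDerivAt g (g' t) t := by
      intro t ht
      have h1 : HasDerivAt (fun s => pn s 1) (vn t 1) t := by
        have := (EuclideanSpace.proj (1 : Fin 2)).hasFDerivAt.comp_hasDerivAt t (hpn t ht.1)
        exact this
      have h2 : HasDerivAt (fun s => vn s 1) ((κ t * umax / ‖pn t‖) * pn t 1) t := by
        have := (EuclideanSpace.proj (1 : Fin 2)).hasFDerivAt.comp_hasDerivAt t (hvn t ht.1)
        exact this
      exact h1.prodMk h2
    have bound : ∀ t ∈ Set.Ico (0:ℝ) T, ‖g' t‖ ≤ K * ‖g t‖ + 0 := by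
      intro t ht
      have h1 : ‖pn t 1‖ ≤ ‖g t‖ := norm_fst_le (g t)
      have h2 : ‖vn t 1‖ ≤ ‖g t‖ := norm_snd_le (g t)
      have hgnn : 0 ≤ ‖g t‖ := norm_nonneg _
      have hκabs : |κ t| = 1 := by rcases hκ t ht.1 with h | h <;> simp [h]
      have hpt : 0 < ‖pn t‖ := norm_pos_iff.2 (hne t ht.1)
      have hc : |κ t * umax / ‖pn t‖| ≤ K := by
        have : |κ t * umax / ‖pn t‖| = umax / ‖pn t‖ := by
          rw [abs_div, abs_mul, hκabs, one_mul, abs_of_pos humax, abs_of_pos hpt]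
        rw [this]
        refine le_trans ?_ (le_max_right 1 (umax / ‖pn m‖))
        exact div_le_div_of_nonneg_left humax.le hμpos (hm ⟨ht.1, ht.2.le⟩)
      have hcn : ‖(κ t * umax / ‖pn t‖) * pn t 1‖ ≤ K * ‖g t‖ := by
        rw [norm_mul]
        exact mul_le_mul hc h1 (norm_nonneg _) (le_trans zero_le_one hK1)
      have hvb : ‖vn t 1‖ ≤ K * ‖g t‖ := le_trans h2 (le_mul_of_one_le_left hgnn hK1)
      rw [add_zero]
      have : ‖g' t‖ = max ‖vn t 1‖ ‖(κ t * umax / ‖pn t‖) * pn t 1‖ := rfl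
      rw [this]
      exact max_le hvb hcn
    have hg0 : ‖g 0‖ ≤ 0 := by
      simp [hg, hp0.2, hv0.2, Prod.norm_def]
    have := norm_le_gronwallBound_of_norm_deriv_right_le
      (f := g) (f' := g') (a := 0) (b := T) (δ := 0) (K := K) (ε := 0)
      (fun t ht => ((hg' t ht).continuousAt.continuousWithinAt))
      (fun t ht => ((hg' t ⟨ht.1, ht.2.le⟩).hasDerivWithinAt))
      hg0 bound T ⟨hT, le_refl T⟩
    rw [gronwallBound_ε0, zero_mul] at this
    have : g T = 0 := norm_le_zero_iff.1 this
    exact ⟨congrArg Prod.fst this, congrArg Prod.snd this⟩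
  intro t ht
  refine ⟨(key t ht).1, ?_, (key t ht).2⟩
  -- positivity of first component via IVT
  by_contra hle
  push_neg at hle
  have hcont : ContinuousOn (fun s => pn s 0) (Set.Icc 0 t) :=
    continuousOn_of_forall_continuousAt fun s hs =>
      ((EuclideanSpace.proj (0 : Fin 2)).continuous.continuousAt).comp (hpc s hs.1)
  have : (0:ℝ) ∈ Set.Icc (pn t 0) (pn 0 0) := ⟨hle, by rw [hp0.1]; exact hx1.le⟩
  obtain ⟨s, hs, hs0⟩ := intermediate_value_Icc' ht hcont this
  have hpns : pn s = 0 := by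
    ext i
    fin_cases i
    · exact hs0
    · exact (key s hs.1).1
  exact hne s hs.1 hpns
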